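/- Let d ≥ 1 and let v₁, …, v_{d+1} ∈ R^d be such that σ := { x ∈ R^d : ⟨v_i, x⟩ ≥ −1 for all 1 ≤ i ≤ d+1 } is a d-dimensional simplex containing the origin in its interior (so that σ° = conv{v₁,…,v_{d+1}} is the polar dual simplex with vertices v₁,…,v_{d+1}). Then for every point p in the interior of σ, vol((σ − p)°) = vol(σ°) / ∏_{i=1}^{d+1} (1 + ⟨v_i, p⟩), where for a set K ⊆ R^d the polar dual is K° = { x ∈ R^d : ⟨x, k⟩ ≥ −1 for all k ∈ K } and vol denotes d-dimensional Lebesgue measure. In particular each factor 1 + ⟨v_i, p⟩ is strictly positive. -/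

import Mathlib

open RealInnerProductSpace MeasureTheory

/-- The polar dual `K° = { x : ⟨x, k⟩ ≥ -1 for all k ∈ K }` of a set `K ⊆ ℝ^d`. -/
def polarDual {d : ℕ} (K : Set (EuclideanSpace ℝ (Fin d))) : Set (EuclideanSpace ℝ (Fin d)) :=
  {x | ∀ k ∈ K, -1 ≤ ⟪x, k⟫}


open Pointwise Set Bornology

noncomputable section
namespace Statement9Aux


variable {d n : ℕ}

lemma convex_polarDual (K : Set (EuclideanSpace ℝ (Fin d))) : Convex ℝ (polarDual K) := by
  intro x hx y hy α β hα hβ hαβ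
  intro k hk
  have h1 := hx k hk
  have h2 := hy k hk
  have : ⟪α • x + β • y, k⟫ = α * ⟪x, k⟫ + β * ⟪y, k⟫ := by
    simp [inner_add_left, real_inner_smul_left, Finset.mul_sum, mul_assoc]
  rw [this]
  nlinarith

lemma zero_mem_hull [NeZero n] (a : Fin n → EuclideanSpace ℝ (Fin d))
    (hb : Bornology.IsBounded {x : EuclideanSpace ℝ (Fin d) | ∀ i, -1 ≤ ⟪a i, x⟫}) :
    (0 : EuclideanSpace ℝ (Fin d)) ∈ convexHull ℝ (Set.range a) := by
  by_contra h
  have hC : IsClosed (convexHull ℝ (Set.range a)) :=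
    ((Set.finite_range a).isCompact_convexHull (𝕜 := ℝ)).isClosed
  obtain ⟨f, u, hu0, hub⟩ :=
    geometric_hahn_banach_point_closed (convex_convexHull ℝ _) hC h
  have hu : 0 < u := by simpa using hu0
  set y := (InnerProductSpace.toDual ℝ (EuclideanSpace ℝ (Fin d))).symm f with hy
  have hfy : ∀ x, ⟪y, x⟫ = f x := fun x => InnerProductSpace.toDual_symm_apply
  have hai : ∀ i, u < ⟪a i, y⟫ := fun i => by
    rw [real_inner_comm, hfy]
    exact hub _ (subset_convexHull ℝ _ ⟨i, rfl⟩)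
  have hyne : y ≠ 0 := by
    intro h0
    have := hai (Classical.arbitrary (Fin n))
    rw [h0, inner_zero_right] at this
    linarith
  obtain ⟨R, hR⟩ := isBounded_iff_forall_norm_le.1 hb
  set t : ℝ := (|R| + 1) / ‖y‖ with ht
  have hyn : 0 < ‖y‖ := norm_pos_iff.2 hyne
  have htpos : 0 < t := by positivity
  have hmem : t • y ∈ {x : EuclideanSpace ℝ (Fin d) | ∀ i, -1 ≤ ⟪a i, x⟫} := by
    intro i
    have : ⟪a i, t • y⟫ = t * ⟪a i, y⟫ := real_inner_smul_right _ _ _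
    rw [this]
    nlinarith [hai i]
  have := hR _ hmem
  rw [norm_smul, Real.norm_eq_abs, abs_of_pos htpos, ht, div_mul_cancel₀ _ (ne_of_gt hyn)] at this
  have : |R| + 1 ≤ |R| := le_trans this (le_abs_self R)
  linarith

lemma polarDual_eq_convexHull [NeZero n] (a : Fin n → EuclideanSpace ℝ (Fin d))
    (hb : Bornology.IsBounded {x : EuclideanSpace ℝ (Fin d) | ∀ i, -1 ≤ ⟪a i, x⟫}) :
    polarDual {x : EuclideanSpace ℝ (Fin d) | ∀ i, -1 ≤ ⟪a i, x⟫}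
      = convexHull ℝ (Set.range a) := by
  apply Set.Subset.antisymm
  · intro z hz
    by_contra h
    have hC : IsClosed (convexHull ℝ (Set.range a)) :=
      ((Set.finite_range a).isCompact_convexHull (𝕜 := ℝ)).isClosed
    obtain ⟨f, s, hz', hub⟩ :=
      geometric_hahn_banach_point_closed (convex_convexHull ℝ _) hC h
    set y := (InnerProductSpace.toDual ℝ (EuclideanSpace ℝ (Fin d))).symm f with hy
    have hfy : ∀ x, ⟪y, x⟫ = f x := fun x => InnerProductSpace.toDual_symm_apply
    have hs0 : s < 0 := by
      have := hub 0 (zero_mem_hull a hb)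
      simpa using this
    have hsinv : 0 < (-s)⁻¹ := inv_pos.2 (by linarith)
    have hss : (-s)⁻¹ * (-s) = 1 := inv_mul_cancel₀ (by linarith)
    have hmem : (-s)⁻¹ • y ∈ {x : EuclideanSpace ℝ (Fin d) | ∀ i, -1 ≤ ⟪a i, x⟫} := by
      intro i
      have h1 : s < ⟪a i, y⟫ := by
        rw [real_inner_comm, hfy]
        exact hub _ (subset_convexHull ℝ _ ⟨i, rfl⟩)
      have : ⟪a i, (-s)⁻¹ • y⟫ = (-s)⁻¹ * ⟪a i, y⟫ := real_inner_smul_right _ _ _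
      rw [this]
      nlinarith [mul_lt_mul_of_pos_left h1 hsinv]
    have hle := hz _ hmem
    have hzy : ⟪z, y⟫ < s := by rw [real_inner_comm, hfy] at *; exact hz'
    have : ⟪z, (-s)⁻¹ • y⟫ = (-s)⁻¹ * ⟪z, y⟫ := real_inner_smul_right _ _ _
    rw [this] at hle
    nlinarith [mul_lt_mul_of_pos_left hzy hsinv]
  · apply convexHull_min
    · rintro _ ⟨i, rfl⟩ k hk
      exact hk i
    · exact convex_polarDual _




/-- reference simplex: hull of 0 and the standard basis vectors -/
def stdSpx (d : ℕ) : Set (EuclideanSpace ℝ (Fin d)) :=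
  convexHull ℝ (Set.range (Fin.lastCases (0 : EuclideanSpace ℝ (Fin d))
    (fun i => EuclideanSpace.single i 1)))

/-- matrix of edge vectors -/
def colMat (y : Fin (d + 1) → EuclideanSpace ℝ (Fin d)) : Matrix (Fin d) (Fin d) ℝ :=
  Matrix.of fun j i => (y i.castSucc - y (Fin.last d)) j

lemma volume_hull (y : Fin (d + 1) → EuclideanSpace ℝ (Fin d)) :
    volume (convexHull ℝ (Set.range y))
      = ENNReal.ofReal |(colMat y).det| * volume (stdSpx d) := by
  set L : EuclideanSpace ℝ (Fin d) →ₗ[ℝ] EuclideanSpace ℝ (Fin d) :=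
    Matrix.toEuclideanLin (colMat y) with hL
  have hLdet : LinearMap.det L = (colMat y).det := by
    rw [hL, Matrix.toEuclideanLin_eq_toLin, LinearMap.det_toLin]
  set A : EuclideanSpace ℝ (Fin d) →ᵃ[ℝ] EuclideanSpace ℝ (Fin d) :=
    (AffineEquiv.constVAdd ℝ (EuclideanSpace ℝ (Fin d)) (y (Fin.last d))).toAffineMap.comp
      L.toAffineMap with hA
  have hAx : ∀ x, A x = y (Fin.last d) + L x := fun x => rfl
  have himg : A '' (stdSpx d) = convexHull ℝ (Set.range y) := by
    rw [stdSpx, AffineMap.image_convexHull, ← Set.range_comp]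
    have hcomp : (⇑A ∘ Fin.lastCases (0 : EuclideanSpace ℝ (Fin d))
        (fun i => EuclideanSpace.single i 1)) = y := by
      funext i
      induction i using Fin.lastCases with
      | last =>
        simp only [Function.comp_apply, Fin.lastCases_last, hAx, map_zero, add_zero]
      | cast i =>
        simp only [Function.comp_apply, Fin.lastCases_castSucc, hAx]
        have : L (EuclideanSpace.single i 1) = y i.castSucc - y (Fin.last d) := by
          apply PiLp.ext
          intro j
          rw [hL, Matrix.toEuclideanLin_apply]
          simp [Matrix.mulVec, dotProduct, EuclideanSpace.single_apply, colMat]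
        rw [this]
        abel
    rw [hcomp]
  have himg2 : A '' (stdSpx d) = y (Fin.last d) +ᵥ (L '' (stdSpx d)) := by
    ext x
    simp only [Set.mem_image, Set.mem_vadd_set, hAx]
    constructor
    · rintro ⟨z, hz, rfl⟩; exact ⟨L z, ⟨z, hz, rfl⟩, rfl⟩
    · rintro ⟨_, ⟨z, hz, rfl⟩, rfl⟩; exact ⟨z, hz, rfl⟩
  rw [← himg, himg2, measure_vadd, Measure.addHaar_image_linearMap, hLdet]





/-- the (d+1)×(d+1) matrix with rows (yᵢ, 1) -/
def homMat (y : Fin (d + 1) → EuclideanSpace ℝ (Fin d)) :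
    Matrix (Fin (d + 1)) (Fin (d + 1)) ℝ :=
  Matrix.of fun i j => Fin.lastCases (motive := fun _ => ℝ) 1 (fun j' => y i j') j

lemma homMat_det (y : Fin (d + 1) → EuclideanSpace ℝ (Fin d)) :
    (homMat y).det = (colMat y).det := by
  set B : Matrix (Fin (d + 1)) (Fin (d + 1)) ℝ :=
    Matrix.of fun i j =>
      if i = Fin.last d then homMat y i j
      else Fin.lastCases (motive := fun _ => ℝ) 0
        (fun j' => y i j' - y (Fin.last d) j') j with hB
  have h1 : (homMat y).det = B.det := by
    apply Matrix.det_eq_of_forall_row_eq_smul_add_const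
      (fun i => if i = Fin.last d then 0 else 1) (Fin.last d) (by simp)
    intro i j
    by_cases hi : i = Fin.last d
    · simp [hB, hi]
    · simp only [hB, Matrix.of_apply, if_neg hi, if_pos rfl]
      induction j using Fin.lastCases with
      | last => simp [homMat]
      | cast j => simp [homMat]
  rw [h1]
  have h2 : B.det = (B.submatrix finSumFinEquiv finSumFinEquiv).det :=
    (Matrix.det_submatrix_equiv_self _ _).symm
  rw [h2]
  have hlastne : ∀ i : Fin d, i.castSucc ≠ Fin.last d := fun i => (Fin.castSucc_lt_last i).ne
  have hnatAdd : (Fin.natAdd d (0 : Fin 1)) = Fin.last d := by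
    apply Fin.ext; simp
  have hcast : ∀ i : Fin d, Fin.castAdd 1 i = Fin.castSucc i := fun _ => rfl
  have h3 : B.submatrix finSumFinEquiv finSumFinEquiv
      = Matrix.fromBlocks (colMat y).transpose 0
          (Matrix.of fun (_ : Fin 1) j => y (Fin.last d) j) 1 := by
    ext i j
    cases i with
    | inl i =>
      cases j with
      | inl j =>
        rw [Matrix.fromBlocks_apply₁₁, Matrix.submatrix_apply,
          finSumFinEquiv_apply_left, finSumFinEquiv_apply_left, hcast, hcast, hB]
        rw [Matrix.of_apply, if_neg (hlastne i), Fin.lastCases_castSucc]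
        simp [colMat, Matrix.transpose_apply]
      | inr j =>
        have hj0 : j = 0 := Subsingleton.elim _ _
        subst hj0
        rw [Matrix.fromBlocks_apply₁₂, Matrix.submatrix_apply,
          finSumFinEquiv_apply_left, finSumFinEquiv_apply_right, hcast, hnatAdd, hB]
        rw [Matrix.of_apply, if_neg (hlastne i), Fin.lastCases_last]
        rfl
    | inr i =>
      have hi0 : i = 0 := Subsingleton.elim _ _
      subst hi0
      cases j with
      | inl j =>
        rw [Matrix.fromBlocks_apply₂₁, Matrix.submatrix_apply,
          finSumFinEquiv_apply_right, finSumFinEquiv_apply_left, hcast, hnatAdd, hB]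
        rw [Matrix.of_apply, if_pos rfl]
        simp [homMat]
      | inr j =>
        have hj0 : j = 0 := Subsingleton.elim _ _
        subst hj0
        rw [Matrix.fromBlocks_apply₂₂, Matrix.submatrix_apply,
          finSumFinEquiv_apply_right, hnatAdd, hB]
        rw [Matrix.of_apply, if_pos rfl]
        simp [homMat]
  rw [h3, Matrix.det_fromBlocks_zero₁₂, Matrix.det_transpose, Matrix.det_one, mul_one]

lemma homMat_scale (v : Fin (d + 1) → EuclideanSpace ℝ (Fin d))
    (p : EuclideanSpace ℝ (Fin d)) (t : Fin (d + 1) → ℝ)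
    (ht : ∀ i, t i = 1 + ⟪v i, p⟫) (htpos : ∀ i, 0 < t i) :
    (homMat (fun i => (t i)⁻¹ • v i)).det = (∏ i, (t i)⁻¹) * (homMat v).det := by
  set Q : Matrix (Fin (d + 1)) (Fin (d + 1)) ℝ :=
    Matrix.of fun j k => Fin.lastCases (motive := fun _ => ℝ)
      (Fin.lastCases (motive := fun _ => ℝ) 1 (fun j' => p j') j)
      (fun k' => if j = k'.castSucc then 1 else 0) k with hQ
  have hNQ : (homMat v) * Q = Matrix.of (fun i k => Fin.lastCases (motive := fun _ => ℝ)
      (t i) (fun k' => v i k') k) := by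
    ext i k
    induction k using Fin.lastCases with
    | last =>
      rw [Matrix.mul_apply]
      rw [Fin.sum_univ_castSucc]
      simp only [hQ, Matrix.of_apply, Fin.lastCases_last, Fin.lastCases_castSucc, homMat]
      rw [ht i, PiLp.inner_apply]
      simp only [RCLike.inner_apply, starRingEnd_apply, star_trivial, one_mul, mul_one]
      rw [add_comm]
      exact congrArg _ (Finset.sum_congr rfl fun x _ => mul_comm _ _)
    | cast k' =>
      rw [Matrix.mul_apply]
      simp only [hQ, Matrix.of_apply, Fin.lastCases_castSucc]
      rw [Finset.sum_eq_single k'.castSucc]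
      · simp [homMat]
      · intro b _ hb
        simp [if_neg hb]
      · intro hmem
        exact absurd (Finset.mem_univ _) hmem
  have hP : homMat (fun i => (t i)⁻¹ • v i)
      = Matrix.diagonal (fun i => (t i)⁻¹) * ((homMat v) * Q) := by
    ext i k
    rw [Matrix.diagonal_mul, hNQ]
    induction k using Fin.lastCases with
    | last =>
      simp only [Matrix.of_apply, Fin.lastCases_last, homMat]
      exact (inv_mul_cancel₀ (ne_of_gt (htpos i))).symm
    | cast k' =>
      simp [homMat, Matrix.of_apply, Fin.lastCases_castSucc]
  have hQdet : Q.det = 1 := by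
    have htri : Q.BlockTriangular id := by
      intro i j hij
      induction j using Fin.lastCases with
      | last =>
        exact absurd hij (not_lt.2 (Fin.le_last i))
      | cast j' =>
        simp only [hQ, Matrix.of_apply, Fin.lastCases_castSucc]
        rw [if_neg]
        intro h
        subst h
        exact lt_irrefl _ hij
    rw [Matrix.det_of_upperTriangular htri]
    apply Finset.prod_eq_one
    intro i _
    induction i using Fin.lastCases with
    | last => simp [hQ]
    | cast i' => simp [hQ]
  rw [hP, Matrix.det_mul, Matrix.det_mul, hQdet, Matrix.det_diagonal, mul_one]


end Statement9Aux
end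

/-- Let `σ = { x ∈ ℝ^d : ⟨v i, x⟩ ≥ -1 for all i }` be a
`d`-dimensional simplex (the convex hull of `d+1` affinely independent points) with
the origin in its interior. Then for every `p` in the interior of `σ`,
`vol((σ - p)°) = vol(σ°) / ∏ i (1 + ⟨v i, p⟩)`, and each factor `1 + ⟨v i, p⟩` is
strictly positive. -/
theorem statement9 (d : ℕ) (hd : 1 ≤ d) (v : Fin (d + 1) → EuclideanSpace ℝ (Fin d))
    (w : Fin (d + 1) → EuclideanSpace ℝ (Fin d)) (hw : AffineIndependent ℝ w)
    (hsimplex : {x : EuclideanSpace ℝ (Fin d) | ∀ i, -1 ≤ ⟪v i, x⟫}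
      = convexHull ℝ (Set.range w))
    (h0 : (0 : EuclideanSpace ℝ (Fin d)) ∈
      interior {x : EuclideanSpace ℝ (Fin d) | ∀ i, -1 ≤ ⟪v i, x⟫})
    (p : EuclideanSpace ℝ (Fin d))
    (hp : p ∈ interior {x : EuclideanSpace ℝ (Fin d) | ∀ i, -1 ≤ ⟪v i, x⟫}) :
    (∀ i, 0 < 1 + ⟪v i, p⟫) ∧
    (volume (polarDual
        ((fun x => x - p) '' {x : EuclideanSpace ℝ (Fin d) | ∀ i, -1 ≤ ⟪v i, x⟫}))).toReal
      = (volume (polarDual {x : EuclideanSpace ℝ (Fin d) | ∀ i, -1 ≤ ⟪v i, x⟫})).toReal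
        / ∏ i, (1 + ⟪v i, p⟫) := by
  classical
  set S : Set (EuclideanSpace ℝ (Fin d)) :=
    {x : EuclideanSpace ℝ (Fin d) | ∀ i, -1 ≤ ⟪v i, x⟫} with hS
  have hSc : IsCompact S := by
    rw [hsimplex]
    exact (Set.finite_range w).isCompact_convexHull (𝕜 := ℝ)
  have hbS : Bornology.IsBounded S := hSc.isBounded
  set t : Fin (d + 1) → ℝ := fun i => 1 + ⟪v i, p⟫ with hts
  have htpos : ∀ i, 0 < t i := by
    intro i
    by_cases hvi : v i = 0
    · simp [hts, hvi]
    · obtain ⟨ε, hε, hball⟩ := Metric.mem_nhds_iff.1 (mem_interior_iff_mem_nhds.1 hp)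
      have hvn : 0 < ‖v i‖ := norm_pos_iff.2 hvi
      set q : EuclideanSpace ℝ (Fin d) := p - (ε / (2 * ‖v i‖)) • v i with hq
      have hqball : q ∈ Metric.ball p ε := by
        rw [Metric.mem_ball, dist_eq_norm, hq]
        have : p - (ε / (2 * ‖v i‖)) • v i - p = -((ε / (2 * ‖v i‖)) • v i) := by abel
        rw [this, norm_neg, norm_smul, Real.norm_eq_abs,
          abs_of_pos (by positivity : (0:ℝ) < ε / (2 * ‖v i‖))]
        have hce : ε / (2 * ‖v i‖) * (2 * ‖v i‖) = ε :=
          div_mul_cancel₀ _ (by positivity)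
        have hcpos : 0 < ε / (2 * ‖v i‖) := by positivity
        nlinarith
      have hqS : q ∈ S := hball hqball
      have h1 : -1 ≤ ⟪v i, q⟫ := hqS i
      rw [hq, inner_sub_right, real_inner_smul_right, real_inner_self_eq_norm_sq] at h1
      have hpos : 0 < (ε / (2 * ‖v i‖)) * (‖v i‖ * ‖v i‖) := by positivity
      simp only [hts]
      nlinarith
  set u : Fin (d + 1) → EuclideanSpace ℝ (Fin d) := fun i => (t i)⁻¹ • v i with hu
  have hinner : ∀ i x, ⟪u i, x⟫ = (t i)⁻¹ * ⟪v i, x⟫ := by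
    intro i x
    rw [hu]
    exact real_inner_smul_left _ _ _
  have himg : (fun x => x - p) '' S = {x : EuclideanSpace ℝ (Fin d) | ∀ i, -1 ≤ ⟪u i, x⟫} := by
    ext x
    constructor
    · rintro ⟨y, hy, rfl⟩ i
      have h1 : -1 ≤ ⟪v i, y⟫ := hy i
      rw [hinner]
      have h2 : ⟪v i, y - p⟫ = ⟪v i, y⟫ - ⟪v i, p⟫ := inner_sub_right _ _ _
      rw [h2]
      have ht' : t i = 1 + ⟪v i, p⟫ := rfl
      have hA : -(t i) ≤ ⟪v i, y⟫ - ⟪v i, p⟫ := by rw [ht']; linarith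
      have h4 := mul_le_mul_of_nonneg_left hA (le_of_lt (inv_pos.2 (htpos i)))
      have h5 : (t i)⁻¹ * -(t i) = -1 := by
        rw [mul_neg, inv_mul_cancel₀ (ne_of_gt (htpos i))]
      linarith
    · intro hx
      refine ⟨x + p, ?_, add_sub_cancel_right x p⟩
      intro i
      have h1 := hx i
      rw [hinner] at h1
      have h2 : ⟪v i, x + p⟫ = ⟪v i, x⟫ + ⟪v i, p⟫ := inner_add_right _ _ _
      rw [h2]
      have ht' : t i = 1 + ⟪v i, p⟫ := rfl
      have h4 := mul_le_mul_of_nonneg_left h1 (le_of_lt (htpos i))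
      have h5 : t i * ((t i)⁻¹ * ⟪v i, x⟫) = ⟪v i, x⟫ := by
        rw [← mul_assoc, mul_inv_cancel₀ (ne_of_gt (htpos i)), one_mul]
      rw [h5] at h4
      rw [ht'] at h4
      linarith
  have hbU : Bornology.IsBounded {x : EuclideanSpace ℝ (Fin d) | ∀ i, -1 ≤ ⟪u i, x⟫} := by
    rw [← himg]
    exact (hSc.image (continuous_id.sub continuous_const)).isBounded
  have hpd1 : polarDual S = convexHull ℝ (Set.range v) :=
    Statement9Aux.polarDual_eq_convexHull v hbS
  have hpd2 : polarDual ((fun x => x - p) '' S) = convexHull ℝ (Set.range u) := by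
    rw [himg]
    exact Statement9Aux.polarDual_eq_convexHull u hbU
  have hdet : (Statement9Aux.colMat u).det
      = (∏ i, (t i)⁻¹) * (Statement9Aux.colMat v).det := by
    rw [← Statement9Aux.homMat_det, ← Statement9Aux.homMat_det]
    exact Statement9Aux.homMat_scale v p t (fun i => rfl) htpos
  refine ⟨htpos, ?_⟩
  rw [hpd1, hpd2, Statement9Aux.volume_hull u, Statement9Aux.volume_hull v]
  rw [ENNReal.toReal_mul, ENNReal.toReal_mul, ENNReal.toReal_ofReal (abs_nonneg _),
    ENNReal.toReal_ofReal (abs_nonneg _), hdet]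
  have hprod : (0:ℝ) < ∏ i, t i := Finset.prod_pos fun i _ => htpos i
  have habs : |(∏ i, (t i)⁻¹) * (Statement9Aux.colMat v).det|
      = (∏ i, t i)⁻¹ * |(Statement9Aux.colMat v).det| := by
    rw [abs_mul]
    congr 1
    rw [abs_of_pos (Finset.prod_pos fun i _ => inv_pos.2 (htpos i)),
      Finset.prod_inv_distrib]
  rw [habs]
  have : ∏ i, (1 + ⟪v i, p⟫) = ∏ i, t i := rfl
  rw [this]
  field_simp
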